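/- Let Γ be a finite group and g, r ∈ Γ with 0 ∉ {g, r, 2g, 2r}, g ∉ {r, -r}, g + r = r + g, 2g + 2r = 0, and 2g - 2r = 0. Then every connected component of the Cayley graph X(Γ, {g, -g, r, -r}) is isomorphic to K_{4,4}. -/

import Mathlib

open SimpleGraph

/-- The Cayley graph `X(Γ, S)` of an (additively written, not necessarily abelian) group `Γ`
with connection set `S`: vertices are the elements of `Γ`, and `x ~ y` iff `y - x ∈ S`
(for `S` closed under inverses this is symmetric; we state it symmetrically). -/
def cayleyGraph {Γ : Type*} [AddGroup Γ] (S : Set Γ) : SimpleGraph Γ where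
  Adj x y := x ≠ y ∧ (y - x ∈ S ∨ x - y ∈ S)
  symm := ⟨by rintro x y ⟨h, h'⟩; exact ⟨h.symm, h'.symm⟩⟩
  loopless := ⟨by rintro x ⟨h, -⟩; exact h rfl⟩

/-- Coordinates for the eight vertices of one component of the Cayley graph in `stmt_10`:
the left block gets even first coordinates, the right block odd ones. -/
def stmt10co : Fin 4 ⊕ Fin 4 → ℤ × ℤ :=
  Sum.elim ![(0,0),(2,0),(0,1),(2,1)] ![(1,0),(3,0),(1,1),(3,1)]

/-- Let `Γ` be a finite group and `g, r ∈ Γ` with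
`0 ∉ {g, r, 2g, 2r}`, `g ∉ {r, -r}`, `g + r = r + g`, `2g + 2r = 0` and `2g - 2r = 0`.
Then every connected component of the Cayley graph `X(Γ, {g, -g, r, -r})` is isomorphic
to `K_{4,4}`. -/
theorem stmt_10 {Γ : Type*} [AddGroup Γ] [Fintype Γ] (g r : Γ)
    (hg0 : g ≠ 0) (hr0 : r ≠ 0) (h2g0 : g + g ≠ 0) (h2r0 : r + r ≠ 0)
    (hgr : g ≠ r) (hgnr : g ≠ -r) (hcomm : g + r = r + g)
    (h1 : g + g + (r + r) = 0) (h2 : g + g - (r + r) = 0) :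
    ∀ c : (cayleyGraph ({g, -g, r, -r} : Set Γ)).ConnectedComponent,
      Nonempty (((cayleyGraph ({g, -g, r, -r} : Set Γ)).induce c.supp) ≃g
        completeBipartiteGraph (Fin 4) (Fin 4)) := by
  intro c
  obtain ⟨v, rfl⟩ := c.exists_rep
  set S : Set Γ := {g, -g, r, -r} with hS
  -- basic facts
  have h2gr : g + g = r + r := by rwa [sub_eq_zero] at h2
  have h4g : g + g + (g + g) = 0 := by rw [h2gr]; rwa [h2gr] at h1
  have hc : ∀ x ∈ ({g, r} : Set Γ), ∀ y ∈ ({g, r} : Set Γ), x + y = y + x := by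
    rintro x hx y hy
    simp only [Set.mem_insert_iff, Set.mem_singleton_iff] at hx hy
    rcases hx with rfl | rfl <;> rcases hy with rfl | rfl
    · rfl
    · exact hcomm
    · exact hcomm.symm
    · rfl
  letI : AddCommGroup (AddSubgroup.closure ({g, r} : Set Γ)) :=
    AddSubgroup.closureAddCommGroupOfComm hc
  have hgH : g ∈ AddSubgroup.closure ({g, r} : Set Γ) := AddSubgroup.subset_closure (by simp)
  have hrH : r ∈ AddSubgroup.closure ({g, r} : Set Γ) := AddSubgroup.subset_closure (by simp)
  set G' : AddSubgroup.closure ({g, r} : Set Γ) := ⟨g, hgH⟩ with hG'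
  set R' : AddSubgroup.closure ({g, r} : Set Γ) := ⟨r, hrH⟩ with hR'
  set B : AddSubgroup.closure ({g, r} : Set Γ) := R' - G' with hB
  have hGR : G' + G' = R' + R' := Subtype.ext h2gr
  have h4G : G' + G' + (G' + G') = 0 := Subtype.ext h4g
  have h4R : R' + R' + (R' + R') = 0 := by rw [← hGR]; exact h4G
  have smul4 : (4 : ℤ) • G' = 0 := by
    have e : (4 : ℤ) • G' = G' + G' + (G' + G') := by
      rw [show (4 : ℤ) = 1 + 1 + (1 + 1) by norm_num]
      simp only [add_smul, one_smul]
    rw [e, h4G]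
  have h2B : B + B = 0 := by
    have e : B + B = R' + R' - (G' + G') := by rw [hB]; abel
    rw [e, ← hGR, sub_self]
  have smul2 : (2 : ℤ) • B = 0 := by
    rw [show (2 : ℤ) = 1 + 1 by norm_num, add_smul, one_smul, h2B]
  -- the key congruence lemma
  have key : ∀ m n m' n' : ℤ, 4 ∣ m - m' → 2 ∣ n - n' →
      m • G' + n • B = m' • G' + n' • B := by
    rintro m n m' n' ⟨k, hk⟩ ⟨l, hl⟩
    have hm : m = m' + k * 4 := by omega
    have hn : n = n' + l * 2 := by omega
    rw [hm, hn, add_smul, add_smul, mul_smul, mul_smul, smul4, smul2, smul_zero, smul_zero,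
      add_zero, add_zero]
  -- the seven nonzero elements
  have nG : G' ≠ 0 := fun h => hg0 (congrArg Subtype.val h)
  have nR : R' ≠ 0 := fun h => hr0 (congrArg Subtype.val h)
  have n2G : G' + G' ≠ 0 := fun h => h2g0 (congrArg Subtype.val h)
  have n3G : G' + G' + G' ≠ 0 := by
    intro h
    have e : G' = G' + G' + (G' + G') - (G' + G' + G') := by abel
    rw [h4G, h, sub_zero] at e
    exact nG e
  have nB : B ≠ 0 := by
    intro h
    rw [hB] at h
    exact hgr (congrArg Subtype.val (sub_eq_zero.mp h)).symm
  have nGB : G' + B ≠ 0 := by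
    intro h
    have e : G' + B = R' := by rw [hB]; abel
    rw [e] at h
    exact nR h
  have n2GB : G' + G' + B ≠ 0 := by
    intro h
    have e : G' + G' + B = G' + R' := by rw [hB]; abel
    rw [e] at h
    have hv : g + r = 0 := congrArg Subtype.val h
    exact hgnr (eq_neg_of_add_eq_zero_left hv)
  have n3GB : G' + G' + G' + B ≠ 0 := by
    intro h
    have e : G' + G' + G' + B = G' + G' + R' := by rw [hB]; abel
    rw [e, hGR] at h
    have e2 : R' = R' + R' + (R' + R') - (R' + R' + R') := by abel
    rw [h4R, h, sub_zero] at e2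
    exact nR e2
  -- kernel characterization
  have kz : ∀ m n : ℤ, m • G' + n • B = 0 → 4 ∣ m ∧ 2 ∣ n := by
    intro m n h
    have e : (m % 4) • G' + (n % 2) • B = 0 := by
      rw [← key m n (m % 4) (n % 2) (by omega) (by omega)]; exact h
    have s2G : (2 : ℤ) • G' = G' + G' := two_smul ℤ G'
    have s3G : (3 : ℤ) • G' = G' + G' + G' := by
      rw [show (3 : ℤ) = 2 + 1 by norm_num, add_smul, two_smul, one_smul]
    have hm : m % 4 = 0 ∨ m % 4 = 1 ∨ m % 4 = 2 ∨ m % 4 = 3 := by omega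
    have hn : n % 2 = 0 ∨ n % 2 = 1 := by omega
    rcases hm with hm | hm | hm | hm <;> rcases hn with hn | hn <;> rw [hm, hn] at e <;>
      simp only [zero_smul, one_smul, zero_add, add_zero, s2G, s3G] at e
    · exact ⟨by omega, by omega⟩
    · exact absurd e nB
    · exact absurd e nG
    · exact absurd e nGB
    · exact absurd e n2G
    · exact absurd e n2GB
    · exact absurd e n3G
    · exact absurd e n3GB
  -- representations of the generators
  have eg : ((1 : ℤ) • G' + (0 : ℤ) • B) = G' := by simp
  have eng : ((-1 : ℤ) • G' + (0 : ℤ) • B) = -G' := by simp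
  have er : ((1 : ℤ) • G' + (1 : ℤ) • B) = R' := by rw [hB]; abel
  have enr : ((-1 : ℤ) • G' + (-1 : ℤ) • B) = -R' := by rw [hB]; abel
  -- membership in S characterization
  have memS : ∀ m n : ℤ, ((↑(m • G' + n • B) : Γ) ∈ S) ↔ ¬ (2 ∣ m) := by
    intro m n
    constructor
    · intro hs
      simp only [hS, Set.mem_insert_iff, Set.mem_singleton_iff] at hs
      have hrep : ∃ a b : ℤ, ¬ (2 ∣ a) ∧ m • G' + n • B = a • G' + b • B := by
        rcases hs with h | h | h | h
        · exact ⟨1, 0, by decide, by rw [eg]; exact Subtype.ext h⟩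
        · refine ⟨-1, 0, by decide, ?_⟩
          rw [eng]; exact Subtype.ext (by rw [h]; simp [hG'])
        · exact ⟨1, 1, by decide, by rw [er]; exact Subtype.ext h⟩
        · refine ⟨-1, -1, by decide, ?_⟩
          rw [enr]; exact Subtype.ext (by rw [h]; simp [hR'])
      obtain ⟨a, b, ha, hab⟩ := hrep
      have h0 : (m - a) • G' + (n - b) • B = 0 := by
        have e : (m - a) • G' + (n - b) • B = (m • G' + n • B) - (a • G' + b • B) := by
          rw [sub_smul, sub_smul]; abel
        rw [e, hab, sub_self]
      have := (kz _ _ h0).1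
      omega
    · intro hodd
      rw [key m n (m % 4) (n % 2) (by omega) (by omega)]
      have h4' : m % 4 = 1 ∨ m % 4 = 3 := by omega
      have h2' : n % 2 = 0 ∨ n % 2 = 1 := by omega
      rcases h4' with h4' | h4' <;> rcases h2' with h2' | h2' <;> rw [h4', h2']
      · rw [eg]; simp [hS, hG']
      · rw [er]; simp [hS, hR']
      · rw [key 3 0 (-1) 0 (by norm_num) (by norm_num), eng]; simp [hS, hG']
      · rw [key 3 1 (-1) (-1) (by norm_num) (by norm_num), enr]; simp [hS, hR']
  -- difference computation
  have hdiff : ∀ m n m' n' : ℤ,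
      ((↑(m' • G' + n' • B) : Γ) + v) - ((↑(m • G' + n • B) : Γ) + v)
        = (↑((m' - m) • G' + (n' - n) • B) : Γ) := by
    intro m n m' n'
    rw [add_sub_add_right_eq_sub]
    have e : (m' - m) • G' + (n' - n) • B = (m' • G' + n' • B) - (m • G' + n • B) := by
      rw [sub_smul, sub_smul]; abel
    rw [e]
    push_cast
    rfl
  -- adjacency characterization
  have adj_iff : ∀ m n m' n' : ℤ,
      (cayleyGraph S).Adj ((↑(m • G' + n • B) : Γ) + v) ((↑(m' • G' + n' • B) : Γ) + v)
        ↔ ¬ (2 ∣ m' - m) := by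
    intro m n m' n'
    constructor
    · rintro ⟨hne, hmem | hmem⟩
      · rw [hdiff m n m' n'] at hmem
        exact (memS _ _).mp hmem
      · rw [hdiff m' n' m n] at hmem
        have := (memS _ _).mp hmem
        omega
    · intro hodd
      refine ⟨?_, Or.inl ?_⟩
      · intro heq
        have h0 : ((m' - m) • G' + (n' - n) • B) = 0 := by
          have hd := hdiff m n m' n'
          rw [heq, sub_self] at hd
          exact Subtype.ext hd.symm
        have := (kz _ _ h0).1
        omega
      · rw [hdiff m n m' n']
        exact (memS _ _).mpr hodd
  -- the vertex map
  set w : Fin 4 ⊕ Fin 4 → Γ :=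
    fun j => (↑((stmt10co j).1 • G' + (stmt10co j).2 • B) : Γ) + v with hw
  have hv0 : (↑((0 : ℤ) • G' + (0 : ℤ) • B) : Γ) + v = v := by simp
  have cv0 : stmt10co (Sum.inl 0) = ((0 : ℤ), (0 : ℤ)) := rfl
  have hvw : v = w (Sum.inl 0) := by
    simp only [hw, cv0]
    exact hv0.symm
  -- every w j is in the component
  have mem_supp : ∀ j : Fin 4 ⊕ Fin 4,
      w j ∈ ((cayleyGraph S).connectedComponentMk v).supp := by
    intro j
    rw [ConnectedComponent.mem_supp_iff, ConnectedComponent.eq]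
    simp only [hw]
    by_cases hpar : 2 ∣ (stmt10co j).1
    · have a1 : (cayleyGraph S).Adj
          ((↑((stmt10co j).1 • G' + (stmt10co j).2 • B) : Γ) + v)
          ((↑((1 : ℤ) • G' + (0 : ℤ) • B) : Γ) + v) :=
        (adj_iff _ _ _ _).mpr (by omega)
      have a2 : (cayleyGraph S).Adj ((↑((1 : ℤ) • G' + (0 : ℤ) • B) : Γ) + v)
          ((↑((0 : ℤ) • G' + (0 : ℤ) • B) : Γ) + v) :=
        (adj_iff _ _ _ _).mpr (by decide)
      have hres := a1.reachable.trans a2.reachable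
      rwa [hv0] at hres
    · have a1 : (cayleyGraph S).Adj
          ((↑((stmt10co j).1 • G' + (stmt10co j).2 • B) : Γ) + v)
          ((↑((0 : ℤ) • G' + (0 : ℤ) • B) : Γ) + v) :=
        (adj_iff _ _ _ _).mpr (by omega)
      have hres := a1.reachable
      rwa [hv0] at hres
  -- every coordinate pair is realized by some index
  have exists_idx : ∀ m n : ℤ, ∃ j : Fin 4 ⊕ Fin 4,
      (stmt10co j).1 • G' + (stmt10co j).2 • B = m • G' + n • B := by
    intro m n
    have hcov : ∀ j : Fin 4 ⊕ Fin 4, 4 ∣ m - (stmt10co j).1 → 2 ∣ n - (stmt10co j).2 →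
        ∃ j' : Fin 4 ⊕ Fin 4,
          (stmt10co j').1 • G' + (stmt10co j').2 • B = m • G' + n • B :=
      fun j d1 d2 => ⟨j, (key m n _ _ d1 d2).symm⟩
    have hm : m % 4 = 0 ∨ m % 4 = 1 ∨ m % 4 = 2 ∨ m % 4 = 3 := by omega
    have hn : n % 2 = 0 ∨ n % 2 = 1 := by omega
    rcases hm with hm | hm | hm | hm <;> rcases hn with hn | hn
    · exact hcov (Sum.inl 0) (by rw [show stmt10co (Sum.inl 0) = ((0 : ℤ), (0 : ℤ)) from rfl]; omega)
        (by rw [show stmt10co (Sum.inl 0) = ((0 : ℤ), (0 : ℤ)) from rfl]; omega)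
    · exact hcov (Sum.inl 2) (by rw [show stmt10co (Sum.inl 2) = ((0 : ℤ), (1 : ℤ)) from rfl]; omega)
        (by rw [show stmt10co (Sum.inl 2) = ((0 : ℤ), (1 : ℤ)) from rfl]; omega)
    · exact hcov (Sum.inr 0) (by rw [show stmt10co (Sum.inr 0) = ((1 : ℤ), (0 : ℤ)) from rfl]; omega)
        (by rw [show stmt10co (Sum.inr 0) = ((1 : ℤ), (0 : ℤ)) from rfl]; omega)
    · exact hcov (Sum.inr 2) (by rw [show stmt10co (Sum.inr 2) = ((1 : ℤ), (1 : ℤ)) from rfl]; omega)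
        (by rw [show stmt10co (Sum.inr 2) = ((1 : ℤ), (1 : ℤ)) from rfl]; omega)
    · exact hcov (Sum.inl 1) (by rw [show stmt10co (Sum.inl 1) = ((2 : ℤ), (0 : ℤ)) from rfl]; omega)
        (by rw [show stmt10co (Sum.inl 1) = ((2 : ℤ), (0 : ℤ)) from rfl]; omega)
    · exact hcov (Sum.inl 3) (by rw [show stmt10co (Sum.inl 3) = ((2 : ℤ), (1 : ℤ)) from rfl]; omega)
        (by rw [show stmt10co (Sum.inl 3) = ((2 : ℤ), (1 : ℤ)) from rfl]; omega)
    · exact hcov (Sum.inr 1) (by rw [show stmt10co (Sum.inr 1) = ((3 : ℤ), (0 : ℤ)) from rfl]; omega)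
        (by rw [show stmt10co (Sum.inr 1) = ((3 : ℤ), (0 : ℤ)) from rfl]; omega)
    · exact hcov (Sum.inr 3) (by rw [show stmt10co (Sum.inr 3) = ((3 : ℤ), (1 : ℤ)) from rfl]; omega)
        (by rw [show stmt10co (Sum.inr 3) = ((3 : ℤ), (1 : ℤ)) from rfl]; omega)
  -- S is closed under negation
  have Sneg : ∀ s ∈ S, -s ∈ S := by
    intro s hs
    simp only [hS, Set.mem_insert_iff, Set.mem_singleton_iff] at hs ⊢
    rcases hs with rfl | rfl | rfl | rfl
    · right; left; rfl
    · left; rw [neg_neg]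
    · right; right; right; rfl
    · right; right; left; rw [neg_neg]
  -- representations of elements of S
  have sRep : ∀ s ∈ S, ∃ a b : ℤ, (↑(a • G' + b • B) : Γ) = s := by
    intro s hs
    simp only [hS, Set.mem_insert_iff, Set.mem_singleton_iff] at hs
    rcases hs with rfl | rfl | rfl | rfl
    · exact ⟨1, 0, by rw [eg]⟩
    · exact ⟨-1, 0, by rw [eng]; simp [hG']⟩
    · exact ⟨1, 1, by rw [er]⟩
    · exact ⟨-1, -1, by rw [enr]; simp [hR']⟩
  -- one step of closure
  have step : ∀ (j : Fin 4 ⊕ Fin 4) (y : Γ), (cayleyGraph S).Adj (w j) y →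
      ∃ j', y = w j' := by
    intro j y hadj
    have hs' : ∃ s ∈ S, y = s + w j := by
      obtain ⟨hne, hmem | hmem⟩ := hadj
      · exact ⟨y - w j, hmem, (sub_add_cancel y (w j)).symm⟩
      · refine ⟨-(w j - y), Sneg _ hmem, ?_⟩
        rw [neg_sub]
        exact (sub_add_cancel y (w j)).symm
    obtain ⟨s, hsS, rfl⟩ := hs'
    obtain ⟨a, b, hab⟩ := sRep s hsS
    obtain ⟨j', hj'⟩ := exists_idx (a + (stmt10co j).1) (b + (stmt10co j).2)
    refine ⟨j', ?_⟩
    simp only [hw]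
    rw [← hab, ← add_assoc]
    have e : (a • G' + b • B) + ((stmt10co j).1 • G' + (stmt10co j).2 • B)
        = (stmt10co j').1 • G' + (stmt10co j').2 • B := by
      rw [hj', add_smul, add_smul]; abel
    rw [show (↑(a • G' + b • B) : Γ) + ↑((stmt10co j).1 • G' + (stmt10co j).2 • B)
        = ((↑((a • G' + b • B) + ((stmt10co j).1 • G' + (stmt10co j).2 • B)) : Γ)) from rfl]
    rw [e]
  -- the support is exactly the range of w
  have supp_eq : ((cayleyGraph S).connectedComponentMk v).supp = Set.range w := by
    ext x
    constructor
    · intro hx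
      rw [ConnectedComponent.mem_supp_iff, ConnectedComponent.eq] at hx
      obtain ⟨p⟩ := hx.symm
      have walk_claim : ∀ (a b : Γ) (q : (cayleyGraph S).Walk a b), (∃ j, a = w j) →
          ∃ j, b = w j := by
        intro a b q
        induction q with
        | nil => exact id
        | cons h q ih =>
          rintro ⟨j, rfl⟩
          exact ih (step j _ h)
      obtain ⟨j, hj⟩ := walk_claim v x p ⟨Sum.inl 0, hvw⟩
      exact ⟨j, hj.symm⟩
    · rintro ⟨j, rfl⟩
      exact mem_supp j
  -- w is injective
  have winj : Function.Injective w := by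
    intro i j hij
    simp only [hw] at hij
    have hco : (stmt10co i).1 • G' + (stmt10co i).2 • B
        = (stmt10co j).1 • G' + (stmt10co j).2 • B :=
      Subtype.ext (add_right_cancel hij)
    have h0 : ((stmt10co i).1 - (stmt10co j).1) • G'
        + ((stmt10co i).2 - (stmt10co j).2) • B = 0 := by
      have e : ((stmt10co i).1 - (stmt10co j).1) • G' + ((stmt10co i).2 - (stmt10co j).2) • B
          = ((stmt10co i).1 • G' + (stmt10co i).2 • B)
            - ((stmt10co j).1 • G' + (stmt10co j).2 • B) := by
        rw [sub_smul, sub_smul]; abel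
      rw [e, hco, sub_self]
    have hd := kz _ _ h0
    clear hco h0 hij
    revert hd
    revert i j
    decide
  -- parity facts
  have hpe : ∀ i : Fin 4, (2 : ℤ) ∣ (stmt10co (Sum.inl i)).1 := by decide
  have hpo : ∀ i : Fin 4, ¬ (2 : ℤ) ∣ (stmt10co (Sum.inr i)).1 := by decide
  -- the bijection onto the support
  have hbij : Function.Bijective (fun j : Fin 4 ⊕ Fin 4 =>
      (⟨w j, mem_supp j⟩ : ((cayleyGraph S).connectedComponentMk v).supp)) := by
    constructor
    · intro i j hij
      exact winj (congrArg Subtype.val hij)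
    · rintro ⟨x, hx⟩
      rw [supp_eq] at hx
      obtain ⟨j, hj⟩ := hx
      exact ⟨j, Subtype.ext hj⟩
  refine ⟨SimpleGraph.Iso.symm ⟨Equiv.ofBijective _ hbij, ?_⟩⟩
  intro a b
  show ((cayleyGraph S).induce _).Adj ⟨w a, mem_supp a⟩ ⟨w b, mem_supp b⟩
    ↔ (completeBipartiteGraph (Fin 4) (Fin 4)).Adj a b
  have hred : ((cayleyGraph S).induce ((cayleyGraph S).connectedComponentMk v).supp).Adj
      ⟨w a, mem_supp a⟩ ⟨w b, mem_supp b⟩ ↔ (cayleyGraph S).Adj (w a) (w b) := by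
    simp [comap_adj, Function.Embedding.coe_subtype]
  rw [hred]
  simp only [hw]
  rw [adj_iff]
  rcases a with a | a <;> rcases b with b | b
  · constructor
    · intro hd
      exact absurd (by have := hpe a; have := hpe b; omega :
        (2 : ℤ) ∣ (stmt10co (Sum.inl b)).1 - (stmt10co (Sum.inl a)).1) hd
    · rintro (⟨-, h⟩ | ⟨h, -⟩) <;> exact absurd h (by simp)
  · constructor
    · intro _
      exact Or.inl ⟨rfl, rfl⟩
    · intro _
      have := hpe a; have := hpo b; omega
  · constructor
    · intro _
      exact Or.inr ⟨rfl, rfl⟩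
    · intro _
      have := hpo a; have := hpe b; omega
  · constructor
    · intro hd
      exact absurd (by have := hpo a; have := hpo b; omega :
        (2 : ℤ) ∣ (stmt10co (Sum.inr b)).1 - (stmt10co (Sum.inr a)).1) hd
    · rintro (⟨h, -⟩ | ⟨-, h⟩) <;> exact absurd h (by simp)
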